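/- Let T be an incomplete table over schema R and K ⊆ R. If the submultiset of K-total tuples of T satisfies the strongly possible key sp⟨K⟩, then there exists a minimum-cardinality submultiset U of T such that T∖U satisfies sp⟨K⟩ and every tuple of U is non-K-total (i.e., each tuple of U has ⊥ in some attribute of K). -/

import Mathlib

/- Common framework: incomplete tables, strongly possible worlds and constraints.
   A tuple assigns each attribute a value in `Option V`, with `none` encoding the
   null marker ⊥.  In the degenerate case of an attribute whose active domain is
   empty, the fresh symbol `s` (outside all domains) is encoded by `none` in the
   strongly possible world: it is a single fixed symbol, equal only to itself and
   different from every domain value, exactly as `none` behaves. -/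

namespace SPDB

variable {α V : Type} [DecidableEq α] [DecidableEq V]

/-- A tuple over attribute type `α` with values in `V`; `none` is the null ⊥. -/
abbrev Tuple (α V : Type) := α → Option V

/-- An incomplete table: a finite multiset of tuples. -/
abbrev Table (α V : Type) := Multiset (Tuple α V)

/-- The active domain of attribute `A` in table `T`: the non-null values in column `A`. -/
def VD (T : Table α V) (A : α) : Finset V :=
  (T.filterMap fun t => t A).toFinset

/-- `t'` is a strongly possible extension of `t` w.r.t. the active domains of `T`:
non-null entries are kept, each null is replaced by an active domain value
(by the fresh symbol, encoded `none`, if the active domain is empty). -/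
def spExt (T : Table α V) (t t' : Tuple α V) : Prop :=
  ∀ A, (t A ≠ none → t' A = t A) ∧
       (t A = none → if (VD T A).Nonempty then ∃ v ∈ VD T A, t' A = some v
                     else t' A = none)

/-- `T'` is a strongly possible world of `T`. -/
def spWorld (T T' : Table α V) : Prop := Multiset.Rel (spExt T) T T'

/-- Two tuples agree on the attribute set `X`. -/
def agrees (X : Finset α) (t1 t2 : Tuple α V) : Prop := ∀ A ∈ X, t1 A = t2 A

/-- Weak similarity on the attribute set `X`. -/
def weakSim (X : Finset α) (t1 t2 : Tuple α V) : Prop :=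
  ∀ A ∈ X, t1 A = t2 A ∨ t1 A = none ∨ t2 A = none

/-- `t` is `X`-total: no nulls among the attributes of `X`. -/
def isTotal (X : Finset α) (t : Tuple α V) : Prop := ∀ A ∈ X, t A ≠ none

instance (X : Finset α) : DecidablePred (isTotal (V := V) X) := fun t =>
  decidable_of_iff (∀ A ∈ X, t A ≠ none) Iff.rfl

/-- Projection of a tuple to the attribute set `X` (nulls outside `X`). -/
def proj (X : Finset α) (t : Tuple α V) : Tuple α V :=
  fun A => if A ∈ X then t A else none

/-- A (complete) table satisfies the key `K`: tuple occurrences are pairwise distinct on `K`. -/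
def keyOn (K : Finset α) (T' : Table α V) : Prop := (T'.map (proj K)).Nodup

/-- A (complete) table satisfies the functional dependency `X → Y`. -/
def FD (X Y : Finset α) (T' : Table α V) : Prop :=
  ∀ t1 ∈ T', ∀ t2 ∈ T', agrees X t1 t2 → agrees Y t1 t2

/-- A (complete) table over schema `R` satisfies the multivalued dependency `X ↠ Y`. -/
def MVD (R X Y : Finset α) (T' : Table α V) : Prop :=
  ∀ t1 ∈ T', ∀ t2 ∈ T', agrees X t1 t2 →
    ∃ t ∈ T', agrees (X ∪ Y) t t1 ∧ agrees (X ∪ (R \ Y)) t t2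

/-- A (complete) table satisfies the cross join `X × Y`. -/
def CJ (X Y : Finset α) (T' : Table α V) : Prop :=
  ∀ t1 ∈ T', ∀ t2 ∈ T', ∃ t ∈ T', agrees X t t1 ∧ agrees Y t t2

/-- `K` is a strongly possible key of `T`: `sp⟨K⟩`. -/
def spKey (T : Table α V) (K : Finset α) : Prop :=
  ∃ T', spWorld T T' ∧ keyOn K T'

/-- The strongly possible functional dependency `X →_sp Y` holds in `T`. -/
def spFD (T : Table α V) (X Y : Finset α) : Prop :=
  ∃ T', spWorld T T' ∧ FD X Y T'

/-- The strongly possible multivalued dependency `X ↠_sp Y` holds in `T` over schema `R`. -/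
def spMVD (R : Finset α) (T : Table α V) (X Y : Finset α) : Prop :=
  ∃ T', spWorld T T' ∧ MVD R X Y T'

/-- The strongly possible cross join `X ×_sp Y` holds in `T`. -/
def spCJ (T : Table α V) (X Y : Finset α) : Prop :=
  ∃ T', spWorld T T' ∧ CJ X Y T'

/-- Lien's null multivalued dependency `X ↠ Y` over schema `R`. -/
def NMVD (R : Finset α) (T : Table α V) (X Y : Finset α) : Prop :=
  ∀ t1 ∈ T, ∀ t2 ∈ T, isTotal X t1 → isTotal X t2 → agrees X t1 t2 →
    ∃ t ∈ T, agrees (X ∪ Y) t t1 ∧ agrees (X ∪ (R \ Y)) t t2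

/-- The minimum number of tuples whose removal from `T` makes `P` hold
(`T = T₀ + S` means that `S` is a submultiset of `T` and `T₀ = T ∖ S`). -/
noncomputable def g3Card (T : Table α V) (P : Table α V → Prop) : ℕ :=
  sInf {n : ℕ | ∃ T₀ S : Table α V, T = T₀ + S ∧ P T₀ ∧ Multiset.card S = n}

/-- `g3`: the minimum, over submultisets `S` of `T` whose removal makes the
constraint `P` hold, of `|S|/|T|`. -/
noncomputable def g3 (T : Table α V) (P : Table α V → Prop) : ℚ :=
  (g3Card T P : ℚ) / (Multiset.card T : ℚ)

/-- The minimum number of tuples whose addition to `T` makes `P` hold. -/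
noncomputable def g5Card (T : Table α V) (P : Table α V → Prop) : ℕ :=
  sInf {n : ℕ | ∃ S : Table α V, P (T + S) ∧ Multiset.card S = n}

/-- `g5`: the minimum, over finite multisets `S` of tuples whose addition makes
the constraint `P` hold, of `|S|/|T|`. -/
noncomputable def g5 (T : Table α V) (P : Table α V → Prop) : ℚ :=
  (g5Card T P : ℚ) / (Multiset.card T : ℚ)

end SPDB


section Infra
open SPDB Multiset
variable {α V : Type} [DecidableEq α] [DecidableEq V]

lemma memVD {T : Table α V} {A : α} {v : V} : v ∈ VD T A ↔ ∃ u ∈ T, u A = some v := by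
  simp [VD, Multiset.mem_filterMap]

lemma relPairs {γ δ : Type} {r : γ → δ → Prop} {s : Multiset γ} {t : Multiset δ}
    (h : Multiset.Rel r s t) :
    ∃ P : Multiset (γ × δ), P.map Prod.fst = s ∧ P.map Prod.snd = t ∧ ∀ p ∈ P, r p.1 p.2 := by
  induction h with
  | zero => exact ⟨0, by simp, by simp, by simp⟩
  | @cons a b s t hab h ih =>
    obtain ⟨P, h1, h2, h3⟩ := ih
    refine ⟨(a, b) ::ₘ P, by simp [h1], by simp [h2], ?_⟩
    intro p hp
    rcases Multiset.mem_cons.mp hp with rfl | hp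
    · exact hab
    · exact h3 p hp

lemma pairsRel {γ δ : Type} {r : γ → δ → Prop} (P : Multiset (γ × δ)) (h : ∀ p ∈ P, r p.1 p.2) :
    Multiset.Rel r (P.map Prod.fst) (P.map Prod.snd) := by
  induction P using Multiset.induction with
  | empty => simp [Multiset.Rel.zero]
  | cons a P ih =>
    simp only [Multiset.map_cons]
    exact Multiset.Rel.cons (h a (Multiset.mem_cons_self a P)) (ih fun p hp => h p (Multiset.mem_cons_of_mem hp))

lemma proj_total {K : Finset α} {T : Table α V} {u u' : Tuple α V} (hu : isTotal K u)
    (h : spExt T u u') : proj K u' = proj K u := by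
  funext A
  unfold proj
  split
  · next hA => exact (h A).1 (hu A hA)
  · rfl

lemma total_nodup {K : Finset α} {W : Table α V} (hW : ∀ u ∈ W, isTotal K u)
    (h : spKey W K) : (W.map (proj K)).Nodup := by
  obtain ⟨W', hrel, hnd⟩ := h
  obtain ⟨P, h1, h2, h3⟩ := relPairs hrel
  have : W.map (proj K) = W'.map (proj K) := by
    rw [← h1, ← h2, Multiset.map_map, Multiset.map_map]
    apply Multiset.map_congr rfl
    intro p hp
    exact (proj_total (hW p.1 (h1 ▸ Multiset.mem_map_of_mem Prod.fst hp)) (h3 p hp)).symm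
  rw [this]
  exact hnd

end Infra
section Infra2
open SPDB Multiset
variable {α V : Type} [DecidableEq α] [DecidableEq V]

/-- Canonical fill values from the active domains of `N`. -/
noncomputable def canon (N : Table α V) : Tuple α V :=
  fun A => if h : (VD N A).Nonempty then some h.choose else none

lemma canon_spec (N : Table α V) (A : α) :
    if (VD N A).Nonempty then ∃ v ∈ VD N A, canon N A = some v else canon N A = none := by
  unfold canon
  by_cases h : (VD N A).Nonempty
  · rw [if_pos h, dif_pos h]; exact ⟨h.choose, h.choose_spec, rfl⟩
  · rw [if_neg h, dif_neg h]

/-- Canonical extension of a tuple filling nulls from the active domains of `N`. -/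
noncomputable def textend (N : Table α V) (t : Tuple α V) : Tuple α V :=
  fun A => if t A ≠ none then t A else canon N A

lemma spExt_textend (N : Table α V) (t : Tuple α V) : spExt N t (textend N t) := by
  intro A
  constructor
  · intro h; unfold textend; rw [if_pos h]
  · intro h
    have he : textend N t A = canon N A := by unfold textend; rw [if_neg (fun hc => hc h)]
    rw [he]
    exact canon_spec N A

lemma textend_key {K : Finset α} {t : Tuple α V} (ht : isTotal K t) (N : Table α V) :
    proj K (textend N t) = proj K t := proj_total ht (spExt_textend N t)

end Infra2
section Infra3
open SPDB Multiset
variable {α V : Type} [DecidableEq α] [DecidableEq V]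

lemma VD_mono {T T' : Table α V} (h : ∀ u ∈ T, u ∈ T') (A : α) : VD T A ⊆ VD T' A := by
  intro v hv
  obtain ⟨u, hu, huv⟩ := memVD.mp hv
  exact memVD.mpr ⟨u, h u hu, huv⟩

/-- First refill: repair a strongly possible extension of `T₀` into one for `t ::ₘ T₀`,
keeping the `K`-columns as canonical as possible. -/
noncomputable def refill (K : Finset α) (T₀ : Table α V) (t : Tuple α V)
    (q : Tuple α V × Tuple α V) : Tuple α V :=
  fun A => if q.1 A ≠ none then q.1 A
           else if A ∈ K ∧ (VD T₀ A).Nonempty then q.2 A else canon (t ::ₘ T₀) A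

lemma key_none {T₀ : Table α V} {q : Tuple α V × Tuple α V} (hq1 : q.1 ∈ T₀)
    (hq : spExt T₀ q.1 q.2) {A : α} (hne : ¬(VD T₀ A).Nonempty) :
    q.1 A = none ∧ q.2 A = none := by
  have h1 : q.1 A = none := by
    cases hv : q.1 A with
    | none => rfl
    | some v => exact absurd ⟨v, memVD.mpr ⟨q.1, hq1, hv⟩⟩ hne
  refine ⟨h1, ?_⟩
  have := (hq A).2 h1
  rwa [if_neg hne] at this

lemma refill_key {K : Finset α} {T₀ : Table α V} {t : Tuple α V} {q : Tuple α V × Tuple α V}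
    (hq1 : q.1 ∈ T₀) (hq : spExt T₀ q.1 q.2) {A : α} (hA : A ∈ K) :
    refill K T₀ t q A = if (VD T₀ A).Nonempty then q.2 A else canon (t ::ₘ T₀) A := by
  unfold refill
  by_cases h1 : q.1 A = none
  · rw [if_neg (fun hc => hc h1)]
    by_cases h2 : (VD T₀ A).Nonempty
    · rw [if_pos ⟨hA, h2⟩, if_pos h2]
    · rw [if_neg (fun hc => h2 hc.2), if_neg h2]
  · have h2 : (VD T₀ A).Nonempty := by
      cases hv : q.1 A with
      | none => exact absurd hv h1
      | some v => exact ⟨v, memVD.mpr ⟨q.1, hq1, hv⟩⟩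
    rw [if_pos h1, if_pos h2, (hq A).1 h1]

lemma spExt_refill {K : Finset α} {T₀ : Table α V} {t : Tuple α V} {q : Tuple α V × Tuple α V}
    (hq1 : q.1 ∈ T₀) (hq : spExt T₀ q.1 q.2) :
    spExt (t ::ₘ T₀) q.1 (refill K T₀ t q) := by
  have hmono := VD_mono (fun u hu => Multiset.mem_cons_of_mem hu : ∀ u ∈ T₀, u ∈ t ::ₘ T₀)
  intro A
  constructor
  · intro h; unfold refill; rw [if_pos h]
  · intro h
    have he : refill K T₀ t q A =
        if A ∈ K ∧ (VD T₀ A).Nonempty then q.2 A else canon (t ::ₘ T₀) A := by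
      unfold refill; rw [if_neg (fun hc => hc h)]
    rw [he]
    by_cases h2 : A ∈ K ∧ (VD T₀ A).Nonempty
    · rw [if_pos h2]
      have := (hq A).2 h
      rw [if_pos h2.2] at this
      obtain ⟨v, hv, hv2⟩ := this
      have hvn : v ∈ VD (t ::ₘ T₀) A := hmono A hv
      rw [if_pos ⟨v, hvn⟩]
      exact ⟨v, hvn, hv2⟩
    · rw [if_neg h2]
      exact canon_spec _ A

lemma refill_proj_inj {K : Finset α} {T₀ : Table α V} {t : Tuple α V}
    {q r : Tuple α V × Tuple α V}
    (hq1 : q.1 ∈ T₀) (hq : spExt T₀ q.1 q.2) (hr1 : r.1 ∈ T₀) (hr : spExt T₀ r.1 r.2)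
    (h : proj K (refill K T₀ t q) = proj K (refill K T₀ t r)) :
    proj K q.2 = proj K r.2 := by
  funext A
  unfold proj
  by_cases hA : A ∈ K
  · rw [if_pos hA, if_pos hA]
    have hh := congrFun h A
    unfold proj at hh
    rw [if_pos hA, if_pos hA, refill_key hq1 hq hA, refill_key hr1 hr hA] at hh
    by_cases h2 : (VD T₀ A).Nonempty
    · rwa [if_pos h2, if_pos h2] at hh
    · rw [(key_none hq1 hq h2).2, (key_none hr1 hr h2).2]
  · rw [if_neg hA, if_neg hA]

end Infra3
section Infra4
open SPDB Multiset
variable {α V : Type} [DecidableEq α] [DecidableEq V]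

/-- Second refill: repair a first-refill extension into one for the table `N'`,
keeping the `K`-columns untouched. -/
noncomputable def refill2 (K : Finset α) (T₀ N' : Table α V) (t : Tuple α V)
    (q : Tuple α V × Tuple α V) : Tuple α V :=
  fun A => if q.1 A ≠ none then q.1 A
           else if A ∈ K then refill K T₀ t q A else canon N' A

lemma refill2_key {K : Finset α} {T₀ N' : Table α V} {t : Tuple α V}
    {q : Tuple α V × Tuple α V} {A : α} (hA : A ∈ K) :
    refill2 K T₀ N' t q A = refill K T₀ t q A := by
  by_cases h1 : q.1 A ≠ none
  · unfold refill2 refill; rw [if_pos h1, if_pos h1]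
  · unfold refill2; rw [if_neg h1, if_pos hA]

lemma refill2_proj {K : Finset α} {T₀ N' : Table α V} {t : Tuple α V}
    {q : Tuple α V × Tuple α V} :
    proj K (refill2 K T₀ N' t q) = proj K (refill K T₀ t q) := by
  funext A
  unfold proj
  by_cases hA : A ∈ K
  · rw [if_pos hA, if_pos hA, refill2_key hA]
  · rw [if_neg hA, if_neg hA]

lemma exchange {K : Finset α} {T T₀ U : Table α V}
    (hTn : ((T.filter (isTotal K)).map (proj K)).Nodup)
    (hT : T = T₀ + U) (hkey : spKey T₀ K) {t : Tuple α V} (ht : t ∈ U)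
    (httot : isTotal K t) :
    ∃ T₀' U' : Table α V, T = T₀' + U' ∧ spKey T₀' K ∧
      Multiset.card U' ≤ Multiset.card U ∧
      Multiset.card (U'.filter (isTotal K)) < Multiset.card (U.filter (isTotal K)) := by
  classical
  obtain ⟨T', hrel, hnd⟩ := hkey
  obtain ⟨P, hP1, hP2, hP3⟩ := relPairs hrel
  have hmem : ∀ q ∈ P, q.1 ∈ T₀ := fun q hq => hP1 ▸ Multiset.mem_map_of_mem Prod.fst hq
  unfold keyOn at hnd
  have hndP : (P.map (fun q => proj K q.2)).Nodup := by
    have he : T'.map (proj K) = P.map (fun q => proj K q.2) := by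
      rw [← hP2, Multiset.map_map]; rfl
    rwa [he] at hnd
  have hPnd : P.Nodup := hndP.of_map _
  have hinj := Multiset.inj_on_of_nodup_map hndP
  have hndR : (P.map (fun q => proj K (refill K T₀ t q))).Nodup :=
    Multiset.Nodup.map_on
      (fun q hq r hr h =>
        hinj q hq r hr (refill_proj_inj (hmem q hq) (hP3 q hq) (hmem r hr) (hP3 r hr) h))
      hPnd
  -- the filtered count decomposition of U
  have hUfilt : U.filter (isTotal K) = t ::ₘ (U.erase t).filter (isTotal K) := by
    conv_lhs => rw [← Multiset.cons_erase ht]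
    rw [Multiset.filter_cons_of_pos _ httot]
  by_cases hcol : ∃ q ∈ P, proj K (refill K T₀ t q) = proj K t
  · -- collision case
    obtain ⟨p, hpP, hpcol⟩ := hcol
    have hs : p.1 ∈ T₀ := hmem p hpP
    have hpext : spExt T₀ p.1 p.2 := hP3 p hpP
    -- s = p.1 is not K-total
    have hsnt : ¬ isTotal K p.1 := by
      intro hstot
      have hproj : proj K p.1 = proj K t := by
        funext A
        unfold proj
        by_cases hA : A ∈ K
        · rw [if_pos hA, if_pos hA]
          have hh := congrFun hpcol A
          unfold proj at hh
          rw [if_pos hA, if_pos hA] at hh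
          have he : refill K T₀ t p A = p.1 A := by
            unfold refill; rw [if_pos (hstot A hA)]
          rw [← he, hh]
        · rw [if_neg hA, if_neg hA]
      have hsub : ({p.1} + {t} : Table α V) ≤ T := by
        rw [hT]
        exact add_le_add (Multiset.singleton_le.mpr hs) (Multiset.singleton_le.mpr ht)
      have hsub2 : ({p.1} + {t} : Table α V) ≤ T.filter (isTotal K) := by
        rw [Multiset.le_filter]
        refine ⟨hsub, ?_⟩
        intro a ha
        rcases Multiset.mem_add.mp ha with h | h
        · rw [Multiset.mem_singleton.mp h]; exact hstot
        · rw [Multiset.mem_singleton.mp h]; exact httot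
      have hnd2 : (({p.1} + {t} : Table α V).map (proj K)).Nodup :=
        Multiset.nodup_of_le (Multiset.map_le_map hsub2) hTn
      rw [Multiset.singleton_add, Multiset.map_cons, Multiset.map_singleton, hproj] at hnd2
      simp [Multiset.nodup_cons] at hnd2
    obtain ⟨P₀, hP₀⟩ := Multiset.exists_cons_of_mem hpP
    have hT₀eq : T₀ = p.1 ::ₘ P₀.map Prod.fst := by rw [← hP1, hP₀, Multiset.map_cons]
    set N' : Table α V := t ::ₘ P₀.map Prod.fst with hN'
    have hmemN' : ∀ u ∈ P₀.map Prod.fst, u ∈ T₀ := by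
      intro u hu; rw [hT₀eq]; exact Multiset.mem_cons_of_mem hu
    -- K-columns: active domains only grow
    have hG1 : ∀ A ∈ K, VD T₀ A ⊆ VD N' A := by
      intro A hA v hv
      obtain ⟨u, hu, huv⟩ := memVD.mp hv
      rw [hT₀eq] at hu
      rcases Multiset.mem_cons.mp hu with rfl | hu'
      · have h1 : refill K T₀ t p A = some v := by
          unfold refill
          rw [if_pos (by rw [huv]; exact fun hc => nomatch hc)]
          exact huv
        have hh := congrFun hpcol A
        unfold proj at hh
        rw [if_pos hA, if_pos hA] at hh
        have hta : t A = some v := by rw [← hh, h1]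
        exact memVD.mpr ⟨t, Multiset.mem_cons_self _ _, hta⟩
      · exact memVD.mpr ⟨u, Multiset.mem_cons_of_mem hu', huv⟩
    -- extensions valid for N'
    have hext : ∀ q ∈ P₀, spExt N' q.1 (refill2 K T₀ N' t q) := by
      intro q hq
      have hqP : q ∈ P := by rw [hP₀]; exact Multiset.mem_cons_of_mem hq
      have hq1 : q.1 ∈ T₀ := hmem q hqP
      have hqe : spExt T₀ q.1 q.2 := hP3 q hqP
      intro A
      constructor
      · intro h; unfold refill2; rw [if_pos h]
      · intro h
        have he : refill2 K T₀ N' t q A =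
            if A ∈ K then refill K T₀ t q A else canon N' A := by
          unfold refill2; rw [if_neg (fun hc => hc h)]
        rw [he]
        by_cases hA : A ∈ K
        · rw [if_pos hA, refill_key hq1 hqe hA]
          by_cases h2 : (VD T₀ A).Nonempty
          · rw [if_pos h2]
            have h3 := (hqe A).2 h
            rw [if_pos h2] at h3
            obtain ⟨v, hv, hv2⟩ := h3
            have hvN : v ∈ VD N' A := hG1 A hA hv
            rw [if_pos ⟨v, hvN⟩]
            exact ⟨v, hvN, hv2⟩
          · rw [if_neg h2]
            have hVt : ∀ v : V, v ∈ VD (t ::ₘ T₀) A ↔ t A = some v := by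
              intro v
              rw [memVD]
              constructor
              · rintro ⟨u, hu, huv⟩
                rcases Multiset.mem_cons.mp hu with rfl | hu'
                · exact huv
                · exact absurd ⟨v, memVD.mpr ⟨u, hu', huv⟩⟩ h2
              · intro hv; exact ⟨t, Multiset.mem_cons_self _ _, hv⟩
            have hVN : ∀ v : V, v ∈ VD N' A ↔ t A = some v := by
              intro v
              rw [memVD]
              constructor
              · rintro ⟨u, hu, huv⟩
                rcases Multiset.mem_cons.mp hu with rfl | hu'
                · exact huv
                · exact absurd ⟨v, memVD.mpr ⟨u, hmemN' u hu', huv⟩⟩ h2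
              · intro hv; exact ⟨t, Multiset.mem_cons_self _ _, hv⟩
            cases hta : t A with
            | none =>
              have e1 : ¬(VD (t ::ₘ T₀) A).Nonempty := by
                rintro ⟨v, hv⟩
                rw [hVt v, hta] at hv
                exact nomatch hv
              have e2 : ¬(VD N' A).Nonempty := by
                rintro ⟨v, hv⟩
                rw [hVN v, hta] at hv
                exact nomatch hv
              rw [if_neg e2]
              have hc := canon_spec (t ::ₘ T₀) A
              rwa [if_neg e1] at hc
            | some w =>
              have e1 : (VD (t ::ₘ T₀) A).Nonempty := ⟨w, (hVt w).mpr hta⟩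
              have e2 : (VD N' A).Nonempty := ⟨w, (hVN w).mpr hta⟩
              have hc := canon_spec (t ::ₘ T₀) A
              rw [if_pos e1] at hc
              obtain ⟨v, hv, hv2⟩ := hc
              have hvw : v = w := by
                have := (hVt v).mp hv
                rw [hta] at this
                exact (Option.some.injEq _ _ ▸ this).symm ▸ rfl
              rw [if_pos e2]
              exact ⟨w, (hVN w).mpr hta, by rw [hv2, hvw]⟩
        · rw [if_neg hA]
          exact canon_spec N' A
    -- the new witness
    refine ⟨N', p.1 ::ₘ U.erase t, ?_, ?_, ?_, ?_⟩
    · rw [hT, hT₀eq]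
      conv_lhs => rw [← Multiset.cons_erase ht]
      rw [Multiset.cons_add, Multiset.add_cons, hN', Multiset.cons_add, Multiset.add_cons,
        Multiset.cons_swap]
    · -- spKey N' K
      set Q : Multiset (Tuple α V × Tuple α V) :=
        (t, textend N' t) ::ₘ P₀.map (fun q => (q.1, refill2 K T₀ N' t q)) with hQ
      have hQ1 : Q.map Prod.fst = N' := by
        rw [hQ, Multiset.map_cons, Multiset.map_map]
        rfl
      refine ⟨Q.map Prod.snd, ?_, ?_⟩
      · have hrel2 : Multiset.Rel (spExt N') (Q.map Prod.fst) (Q.map Prod.snd) := by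
          apply pairsRel
          intro q hq
          rw [hQ] at hq
          rcases Multiset.mem_cons.mp hq with rfl | hq'
          · exact spExt_textend N' t
          · obtain ⟨r, hr, hrq⟩ := Multiset.mem_map.mp hq'
            rw [← hrq]
            exact hext r hr
        rwa [hQ1] at hrel2
      · show ((Q.map Prod.snd).map (proj K)).Nodup
        rw [Multiset.map_map, hQ, Multiset.map_cons, Multiset.map_map]
        have he1 : (proj K ∘ Prod.snd) (t, textend N' t) = proj K t := textend_key httot N'
        have he2 : P₀.map ((proj K ∘ Prod.snd) ∘ fun q => (q.1, refill2 K T₀ N' t q)) =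
            P₀.map (fun q => proj K (refill K T₀ t q)) := by
          apply Multiset.map_congr rfl
          intro q _
          exact refill2_proj
        rw [he1, he2]
        rw [hP₀, Multiset.map_cons] at hndR
        have hcons := Multiset.nodup_cons.mp hndR
        rw [Multiset.nodup_cons]
        refine ⟨?_, hcons.2⟩
        rw [← hpcol]
        exact hcons.1
    · -- cards
      have hcU : Multiset.card U = Multiset.card (U.erase t) + 1 := by
        conv_lhs => rw [← Multiset.cons_erase ht]
        rw [Multiset.card_cons]
      rw [Multiset.card_cons, hcU]
    · rw [Multiset.filter_cons_of_neg _ hsnt, hUfilt, Multiset.card_cons]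
      omega
  · -- no collision: just add t back
    refine ⟨t ::ₘ T₀, U.erase t, ?_, ?_, ?_, ?_⟩
    · rw [hT]
      conv_lhs => rw [← Multiset.cons_erase ht]
      rw [Multiset.cons_add, Multiset.add_cons]
    · set Q : Multiset (Tuple α V × Tuple α V) :=
        (t, textend (t ::ₘ T₀) t) ::ₘ P.map (fun q => (q.1, refill K T₀ t q)) with hQ
      have hQ1 : Q.map Prod.fst = t ::ₘ T₀ := by
        rw [hQ, Multiset.map_cons, Multiset.map_map]
        have : P.map (Prod.fst ∘ fun q => (q.1, refill K T₀ t q)) = P.map Prod.fst := rfl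
        rw [this, hP1]
      refine ⟨Q.map Prod.snd, ?_, ?_⟩
      · have hrel2 : Multiset.Rel (spExt (t ::ₘ T₀)) (Q.map Prod.fst) (Q.map Prod.snd) := by
          apply pairsRel
          intro q hq
          rw [hQ] at hq
          rcases Multiset.mem_cons.mp hq with rfl | hq'
          · exact spExt_textend _ t
          · obtain ⟨r, hr, hrq⟩ := Multiset.mem_map.mp hq'
            rw [← hrq]
            exact spExt_refill (hmem r hr) (hP3 r hr)
        rwa [hQ1] at hrel2
      · show ((Q.map Prod.snd).map (proj K)).Nodup
        rw [Multiset.map_map, hQ, Multiset.map_cons, Multiset.map_map]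
        have he1 : (proj K ∘ Prod.snd) (t, textend (t ::ₘ T₀) t) = proj K t :=
          textend_key httot _
        have he2 : P.map ((proj K ∘ Prod.snd) ∘ fun q => (q.1, refill K T₀ t q)) =
            P.map (fun q => proj K (refill K T₀ t q)) := rfl
        rw [he1, he2, Multiset.nodup_cons]
        refine ⟨?_, hndR⟩
        intro hmem'
        obtain ⟨q, hq, hq2⟩ := Multiset.mem_map.mp hmem'
        exact hcol ⟨q, hq, hq2⟩
    · have hcU : Multiset.card U = Multiset.card (U.erase t) + 1 := by
        conv_lhs => rw [← Multiset.cons_erase ht]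
        rw [Multiset.card_cons]
      omega
    · rw [hUfilt, Multiset.card_cons]
      omega

end Infra4
section Infra5
open SPDB Multiset
variable {α V : Type} [DecidableEq α] [DecidableEq V]

lemma descend {K : Finset α} {T : Table α V}
    (hTn : ((T.filter (isTotal K)).map (proj K)).Nodup) :
    ∀ k (T₀ U : Table α V), T = T₀ + U → spKey T₀ K →
      Multiset.card (U.filter (isTotal K)) ≤ k →
      ∃ T₀' U' : Table α V, T = T₀' + U' ∧ spKey T₀' K ∧
        Multiset.card U' ≤ Multiset.card U ∧ ∀ u ∈ U', ¬ isTotal K u := by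
  intro k
  induction k with
  | zero =>
    intro T₀ U hT hkey hc
    refine ⟨T₀, U, hT, hkey, le_refl _, ?_⟩
    have h0 : U.filter (isTotal K) = 0 := by
      rw [← Multiset.card_eq_zero]
      omega
    intro u hu htu
    have : u ∈ U.filter (isTotal K) := Multiset.mem_filter.mpr ⟨hu, htu⟩
    rw [h0] at this
    exact absurd this (Multiset.notMem_zero u)
  | succ k ih =>
    intro T₀ U hT hkey hc
    by_cases h0 : Multiset.card (U.filter (isTotal K)) = 0
    · exact ih T₀ U hT hkey (by omega)
    · have : ∃ u, u ∈ U.filter (isTotal K) := by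
        rw [← Multiset.card_pos_iff_exists_mem]
        omega
      obtain ⟨u, hu⟩ := this
      have huU : u ∈ U := (Multiset.mem_filter.mp hu).1
      have hut : isTotal K u := (Multiset.mem_filter.mp hu).2
      obtain ⟨T₀', U', hT', hkey', hcard', hfilt'⟩ := exchange hTn hT hkey huU hut
      obtain ⟨T₀'', U'', hT'', hkey'', hcard'', hnt''⟩ :=
        ih T₀' U' hT' hkey' (by omega)
      exact ⟨T₀'', U'', hT'', hkey'', le_trans hcard'' hcard', hnt''⟩

end Infra5
open SPDB in
/-- if the `K`-total part of `T` satisfies `sp⟨K⟩`, then there is a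
minimum-cardinality submultiset `U` of `T` (i.e. `T = T₀ + U`) whose removal makes
`sp⟨K⟩` hold and all of whose tuples are non-`K`-total. -/
theorem statement0 {α V : Type} [DecidableEq α] [DecidableEq V]
    (R : Finset α) (K : Finset α) (hK : K ⊆ R) (T : Table α V)
    (htot : spKey (T.filter (isTotal K)) K) :
    ∃ T₀ U : Table α V, T = T₀ + U ∧ spKey T₀ K ∧
      (∀ t ∈ U, ¬ isTotal K t) ∧
      ∀ T₀' U' : Table α V, T = T₀' + U' → spKey T₀' K →
        Multiset.card U ≤ Multiset.card U' := by
  classical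
  have hTn : ((T.filter (isTotal K)).map (proj K)).Nodup :=
    total_nodup (fun u hu => (Multiset.mem_filter.mp hu).2) htot
  set S : Set ℕ :=
    {n : ℕ | ∃ T₀ U : Table α V, T = T₀ + U ∧ spKey T₀ K ∧ Multiset.card U = n} with hS
  have hTsplit : T = T.filter (isTotal K) + T.filter (fun u => ¬ isTotal K u) :=
    (Multiset.filter_add_not (isTotal K) T).symm
  have hne : (Multiset.card (T.filter (fun u => ¬ isTotal K u))) ∈ S :=
    ⟨T.filter (isTotal K), T.filter (fun u => ¬ isTotal K u), hTsplit, htot, rfl⟩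
  have hInf : sInf S ∈ S := Nat.sInf_mem ⟨_, hne⟩
  obtain ⟨T₀, U, hT, hkey, hcard⟩ := hInf
  obtain ⟨T₀', U', hT', hkey', hcard', hnt'⟩ :=
    descend hTn (Multiset.card (U.filter (isTotal K))) T₀ U hT hkey (le_refl _)
  refine ⟨T₀', U', hT', hkey', hnt', ?_⟩
  intro T₀'' U'' hT'' hkey''
  have hmem : Multiset.card U'' ∈ S := ⟨T₀'', U'', hT'', hkey'', rfl⟩
  have := Nat.sInf_le hmem
  omega
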